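/- Let the e-BH procedure at level α be applied to compound e-variables E₁,…,E_K, rejecting the k* hypotheses with largest e-values where k* = max{k : k·E_[k]/K ≥ 1/α}. Then the false discovery rate is at most α: E^P[F/R] ≤ α for every P in the universe, where R is the number of rejections and F the number of rejected true nulls (with 0/0 = 0). -/

import Mathlib

open MeasureTheory
open scoped ENNReal
open scoped Classical

/-- The number of rejections of the e-BH procedure at level `α` applied to e-values
`e : Fin K → ℝ≥0∞`: the largest `r ≤ K` such that at least `r` of the e-values satisfy
`e k ≥ K/(α r)` (written multiplicatively as `K ≤ e k * (α * r)`). -/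
noncomputable def ebhNumRejections (K : ℕ) (α : ℝ≥0∞) (e : Fin K → ℝ≥0∞) : ℕ :=
  sSup {r : ℕ | r ≤ K ∧
    r ≤ (Finset.univ.filter (fun k => (K : ℝ≥0∞) ≤ e k * (α * r))).card}

/-- The e-BH procedure rejects hypothesis `k` iff `e k ≥ K/(α R)` where `R` is the number of
rejections. -/
def ebhReject (K : ℕ) (α : ℝ≥0∞) (e : Fin K → ℝ≥0∞) (k : Fin K) : Prop :=
  (K : ℝ≥0∞) ≤ e k * (α * ebhNumRejections K α e)

lemma ebh_le_card (K : ℕ) (α : ℝ≥0∞) (e : Fin K → ℝ≥0∞) :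
    ebhNumRejections K α e ≤ (Finset.univ.filter (fun k => ebhReject K α e k)).card := by
  have hmem : ebhNumRejections K α e ∈ {r : ℕ | r ≤ K ∧
      r ≤ (Finset.univ.filter (fun k => (K : ℝ≥0∞) ≤ e k * (α * r))).card} := by
    apply Nat.sSup_mem
    · exact ⟨0, by simp⟩
    · exact ⟨K, fun r hr => hr.1⟩
  refine le_trans hmem.2 (le_of_eq ?_)
  unfold ebhReject
  congr

/-- e-BH applied to compound e-variables controls the FDR at level `α`:
`E^P[F/R] ≤ α` for every `P` in the universe, with the convention `0/0 = 0`. -/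
theorem ebh_fdr_control {Ω : Type*} [MeasurableSpace Ω] {K : ℕ}
    (H : Fin K → Set (Measure Ω)) (Unv : Set (Measure Ω))
    (hprob : ∀ P ∈ Unv, IsProbabilityMeasure P)
    (α : ℝ≥0∞) (hα0 : 0 < α) (hα1 : α ≤ 1)
    (E : Fin K → Ω → ℝ≥0∞) (hEmeas : ∀ k, Measurable (E k))
    (hcompound : ∀ P ∈ Unv,
      ∑ k ∈ Finset.univ.filter (fun k => P ∈ H k), ∫⁻ ω, E k ω ∂P ≤ K) :
    ∀ P ∈ Unv,
      ∫⁻ ω,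
        ((Finset.univ.filter
            (fun k => P ∈ H k ∧ ebhReject K α (fun j => E j ω) k)).card : ℝ≥0∞) /
        ((Finset.univ.filter
            (fun k => ebhReject K α (fun j => E j ω) k)).card : ℝ≥0∞) ∂P ≤ α := by
  intro P hP
  rcases Nat.eq_zero_or_pos K with hK | hK
  · subst hK
    simp
  have hK0 : (K : ℝ≥0∞) ≠ 0 := by exact_mod_cast hK.ne'
  have hKtop : (K : ℝ≥0∞) ≠ ⊤ := ENNReal.natCast_ne_top K
  set nulls := Finset.univ.filter (fun k => P ∈ H k) with hnulls
  have key : ∀ ω,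
      ((Finset.univ.filter
          (fun k => P ∈ H k ∧ ebhReject K α (fun j => E j ω) k)).card : ℝ≥0∞) /
      ((Finset.univ.filter
          (fun k => ebhReject K α (fun j => E j ω) k)).card : ℝ≥0∞)
      ≤ ∑ k ∈ nulls, E k ω * (α / K) := by
    intro ω
    set e := fun j => E j ω with he
    set Rej := Finset.univ.filter (fun k => ebhReject K α e k) with hRej
    set NR := Finset.univ.filter (fun k => P ∈ H k ∧ ebhReject K α e k) with hNR
    have hRcard : ebhNumRejections K α e ≤ Rej.card := ebh_le_card K α e
    have hsub : NR ⊆ Rej := by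
      intro k hk
      simp only [hNR, hRej, Finset.mem_filter] at hk ⊢
      exact ⟨hk.1, hk.2.2⟩
    have step : (NR.card : ℝ≥0∞) / (Rej.card : ℝ≥0∞) ≤ ∑ k ∈ NR, e k * (α / K) := by
      rcases Nat.eq_zero_or_pos Rej.card with h0 | hpos
      · have : NR.card = 0 := Nat.le_zero.mp (h0 ▸ Finset.card_le_card hsub)
        simp [this]
      · have hc0 : ((Rej.card : ℝ≥0∞)) ≠ 0 := by exact_mod_cast hpos.ne'
        have hct : ((Rej.card : ℝ≥0∞)) ≠ ⊤ := ENNReal.natCast_ne_top _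
        have hterm : ∀ k ∈ NR, ((Rej.card : ℝ≥0∞))⁻¹ ≤ e k * (α / K) := by
          intro k hk
          have hrej : ebhReject K α e k := (Finset.mem_filter.mp hk).2.2
          have h1 : (K : ℝ≥0∞) ≤ e k * (α * Rej.card) := by
            refine le_trans hrej ?_
            gcongr
          rw [← mul_div_assoc, ENNReal.le_div_iff_mul_le (Or.inl hK0) (Or.inl hKtop)]
          calc (Rej.card : ℝ≥0∞)⁻¹ * K
              ≤ (Rej.card : ℝ≥0∞)⁻¹ * (e k * (α * Rej.card)) := by gcongr
            _ = e k * α * ((Rej.card : ℝ≥0∞)⁻¹ * Rej.card) := by ring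
            _ = e k * α := by rw [ENNReal.inv_mul_cancel hc0 hct, mul_one]
        calc (NR.card : ℝ≥0∞) / (Rej.card : ℝ≥0∞)
            = ∑ _k ∈ NR, ((Rej.card : ℝ≥0∞))⁻¹ := by
              rw [Finset.sum_const, div_eq_mul_inv, nsmul_eq_mul]
          _ ≤ ∑ k ∈ NR, e k * (α / K) := Finset.sum_le_sum hterm
    refine step.trans (Finset.sum_le_sum_of_subset ?_)
    intro k hk
    simp only [hNR, hnulls, Finset.mem_filter] at hk ⊢
    exact ⟨hk.1, hk.2.1⟩
  have := hprob P hP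
  calc ∫⁻ ω,
        ((Finset.univ.filter
            (fun k => P ∈ H k ∧ ebhReject K α (fun j => E j ω) k)).card : ℝ≥0∞) /
        ((Finset.univ.filter
            (fun k => ebhReject K α (fun j => E j ω) k)).card : ℝ≥0∞) ∂P
      ≤ ∫⁻ ω, ∑ k ∈ nulls, E k ω * (α / K) ∂P := lintegral_mono key
    _ = ∑ k ∈ nulls, ∫⁻ ω, E k ω * (α / K) ∂P :=
        lintegral_finset_sum _ (fun k _ => (hEmeas k).mul_const _)
    _ = ∑ k ∈ nulls, (∫⁻ ω, E k ω ∂P) * (α / K) := by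
        refine Finset.sum_congr rfl fun k _ => ?_
        exact lintegral_mul_const _ (hEmeas k)
    _ = (∑ k ∈ nulls, ∫⁻ ω, E k ω ∂P) * (α / K) := (Finset.sum_mul ..).symm
    _ ≤ (K : ℝ≥0∞) * (α / K) := by gcongr; exact hcompound P hP
    _ = α := ENNReal.mul_div_cancel hK0 hKtop
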